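/- arXiv:1710.00800 — 2 statements merged into one kernel-verified Lean document; each statement's English description precedes it below -/
import Mathlib

section
/- Let r ∈ (0,1) and set α = (1−r)·log 2 / ((1+r)·log(1+r) + r·log(1/(4r))). Then for any x, y > 0 there exist p, q ∈ (0,1) satisfying 1/p' + 1/q' = 1/r' (i.e., (p−1)/p + (q−1)/q = (r−1)/r) such that A(p,q,r)^{α·r/(1−r)} · x^{((1−p)/p)·(r/(1−r))} · y^{((1−q)/q)·(r/(1−r))} ≥ x + y. -/
open Real

/-- Young's inequality constant `c_m = m^{1/m} / |m'|^{1/m'}` where `m' = m/(m-1)`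
is the Hölder conjugate (so `1/m' = (m-1)/m`). -/
noncomputable def youngC (m : ℝ) : ℝ :=
  m ^ (1 / m) / |m / (m - 1)| ^ ((m - 1) / m)

/-- The constant `A(p,q,r) = (c_p c_q / c_r) · r^{2/r} / (p^{2/p} q^{2/q})`. -/
noncomputable def Aconst (p q r : ℝ) : ℝ :=
  (youngC p * youngC q / youngC r) * r ^ (2 / r) / (p ^ (2 / p) * q ^ (2 / q))

namespace EpiAux


noncomputable def phi (t : ℝ) : ℝ := (1+t) * Real.log (1+t)
noncomputable def Hb (a : ℝ) : ℝ := Real.negMulLog a + Real.negMulLog (1-a)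
noncomputable def psi (s a : ℝ) : ℝ := phi s - phi (a*s) - phi ((1-a)*s)
noncomputable def FF (s a : ℝ) : ℝ := psi s 2⁻¹ * Hb a - Real.log 2 * psi s a
noncomputable def FD (s a : ℝ) : ℝ :=
  psi s 2⁻¹ * (Real.log (1-a) - Real.log a)
    - Real.log 2 * (s * (Real.log (1+(1-a)*s) - Real.log (1+a*s)))
noncomputable def FDD (s a : ℝ) : ℝ :=
  psi s 2⁻¹ * (-(1-a)⁻¹ - a⁻¹)
    + Real.log 2 * (s * (s/(1+(1-a)*s) + s/(1+a*s)))

lemma hasDerivAt_phi_comp (s a : ℝ) (h : (0:ℝ) < 1 + a*s) :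
    HasDerivAt (fun a => phi (a*s)) ((Real.log (1+a*s) + 1) * s) a := by
  have h1 : HasDerivAt (fun a : ℝ => 1 + a*s) s a := by
    simpa using ((hasDerivAt_id a).mul_const s).const_add 1
  have h2 : HasDerivAt (fun x : ℝ => x * Real.log x) (Real.log (1+a*s) + 1) (1+a*s) :=
    Real.hasDerivAt_mul_log h.ne'
  have := h2.comp a h1
  simpa [phi, Function.comp_def] using this

lemma hasDerivAt_psi (s a : ℝ) (h1 : (0:ℝ) < 1 + a*s) (h2 : (0:ℝ) < 1 + (1-a)*s) :
    HasDerivAt (psi s) (s * (Real.log (1+(1-a)*s) - Real.log (1+a*s))) a := by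
  have hb : HasDerivAt (fun a : ℝ => phi ((1-a)*s)) (-((Real.log (1+(1-a)*s) + 1) * s)) a := by
    have inner : HasDerivAt (fun a : ℝ => 1 - a) (-1) a := by
      simpa using (hasDerivAt_id a).const_sub 1
    have outer := hasDerivAt_phi_comp s (1-a) h2
    have := outer.comp a inner
    simpa [Function.comp_def] using this.congr_deriv (by ring)
  have ha := hasDerivAt_phi_comp s a h1
  have : HasDerivAt (psi s)
      (0 - (Real.log (1+a*s) + 1) * s - -((Real.log (1+(1-a)*s) + 1) * s)) a :=
    ((hasDerivAt_const a (phi s)).sub ha).sub hb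
  exact this.congr_deriv (by ring)

lemma hasDerivAt_Hb (a : ℝ) (h0 : a ≠ 0) (h1 : a ≠ 1) :
    HasDerivAt Hb (Real.log (1-a) - Real.log a) a := by
  have ha : HasDerivAt Real.negMulLog (-Real.log a - 1) a := Real.hasDerivAt_negMulLog h0
  have hb : HasDerivAt (fun a : ℝ => Real.negMulLog (1-a)) (Real.log (1-a) + 1) a := by
    have inner : HasDerivAt (fun a : ℝ => 1 - a) (-1) a := by
      simpa using (hasDerivAt_id a).const_sub 1
    have outer : HasDerivAt Real.negMulLog (-Real.log (1-a) - 1) (1-a) :=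
      Real.hasDerivAt_negMulLog (sub_ne_zero.2 (Ne.symm h1))
    have := outer.comp a inner
    simpa [Function.comp_def] using this.congr_deriv (by ring)
  have := ha.add hb
  exact this.congr_deriv (by ring)

lemma hasDerivAt_FF (s a : ℝ) (h0 : a ≠ 0) (h1' : a ≠ 1)
    (h1 : (0:ℝ) < 1 + a*s) (h2 : (0:ℝ) < 1 + (1-a)*s) :
    HasDerivAt (FF s) (FD s a) a := by
  have := ((hasDerivAt_Hb a h0 h1').const_mul (psi s 2⁻¹)).sub
    ((hasDerivAt_psi s a h1 h2).const_mul (Real.log 2))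
  exact this.congr_deriv (by rw [FD])

lemma hasDerivAt_FD (s a : ℝ) (h0 : a ≠ 0) (h1' : a ≠ 1)
    (h1 : (0:ℝ) < 1 + a*s) (h2 : (0:ℝ) < 1 + (1-a)*s) :
    HasDerivAt (FD s) (FDD s a) a := by
  have la : HasDerivAt (fun a : ℝ => Real.log a) a⁻¹ a := Real.hasDerivAt_log h0
  have lb : HasDerivAt (fun a : ℝ => Real.log (1-a)) (-(1-a)⁻¹) a := by
    have inner : HasDerivAt (fun a : ℝ => 1 - a) (-1) a := by
      simpa using (hasDerivAt_id a).const_sub 1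
    have := (Real.hasDerivAt_log (sub_ne_zero.2 (Ne.symm h1'))).comp a inner
    simpa [Function.comp_def] using this.congr_deriv (by ring)
  have l1 : HasDerivAt (fun a : ℝ => Real.log (1+a*s)) (s/(1+a*s)) a := by
    have inner : HasDerivAt (fun a : ℝ => 1 + a*s) s a := by
      simpa using ((hasDerivAt_id a).mul_const s).const_add 1
    have := (Real.hasDerivAt_log h1.ne').comp a inner
    simpa [Function.comp_def] using this.congr_deriv (by rw [div_eq_inv_mul])
  have l2 : HasDerivAt (fun a : ℝ => Real.log (1+(1-a)*s)) (-(s/(1+(1-a)*s))) a := by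
    have inner : HasDerivAt (fun a : ℝ => 1 + (1-a)*s) (-s) a := by
      have : HasDerivAt (fun a : ℝ => 1 - a) (-1) a := by
        simpa using (hasDerivAt_id a).const_sub 1
      simpa using (this.mul_const s).const_add 1
    have := (Real.hasDerivAt_log h2.ne').comp a inner
    simpa [Function.comp_def] using this.congr_deriv (by field_simp)
  have := ((lb.sub la).const_mul (psi s 2⁻¹)).sub
    (((l2.sub l1).const_mul s).const_mul (Real.log 2))
  refine this.congr_deriv ?_
  rw [FDD]; ring
lemma psi_half (s : ℝ) : psi s 2⁻¹ = phi s - 2 * phi (s/2) := by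
  have h1 : ((1:ℝ) - 2⁻¹) = 2⁻¹ := by norm_num
  rw [psi, h1]
  have h2 : (2⁻¹ : ℝ) * s = s/2 := by ring
  rw [h2]; ring

lemma psi_half_pos {s : ℝ} (hs : 0 < s) : 0 < psi s 2⁻¹ := by
  have hc := Real.strictConvexOn_mul_log
  have h := hc.2 (Set.mem_Ici.2 (by norm_num : (0:ℝ) ≤ 1))
    (Set.mem_Ici.2 (by linarith : (0:ℝ) ≤ 1 + s)) (by linarith)
    (by norm_num : (0:ℝ) < 1/2) (by norm_num : (0:ℝ) < 1/2) (by norm_num)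
  simp only [smul_eq_mul] at h
  have e1 : (1:ℝ)/2 * 1 + 1/2 * (1+s) = 1 + s/2 := by ring
  rw [e1] at h
  rw [psi_half, phi, phi]
  simp only [Real.log_one] at h
  nlinarith [h]

lemma fdd_eq {s : ℝ} (hs : 0 < s) {b : ℝ} (hb : 0 < b) (hb1 : b < 1) :
    FDD s b = (Real.log 2 * s^2*(2+s)*(b*(1-b)) - psi s 2⁻¹ * (1+s+(b*(1-b))*s^2))
      / ((b*(1-b)) * (1+s+(b*(1-b))*s^2)) := by
  have d1 : (0:ℝ) < 1 + b*s := by nlinarith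
  have d2 : (0:ℝ) < 1 + (1-b)*s := by nlinarith
  have n0 : b ≠ 0 := hb.ne'
  have n1 : (1:ℝ) - b ≠ 0 := by linarith
  have n2 : (1:ℝ) + b*s ≠ 0 := d1.ne'
  have n3 : (1:ℝ) + (1-b)*s ≠ 0 := d2.ne'
  have n4 : (1:ℝ)+s+(b*(1-b))*s^2 ≠ 0 := by nlinarith
  rw [FDD]
  generalize psi s 2⁻¹ = C
  have e : (1:ℝ)+s+(b*(1-b))*s^2 = (1+b*s)*(1+(1-b)*s) := by ring
  rw [e]
  field_simp
  ring

lemma core_shift {c L s w w' : ℝ} (hc : 0 < c) (hs : 0 < s) (hw : 0 < w) (hww : w ≤ w')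
    (h : 0 ≤ L*s^2*(2+s)*w - c*(1+s+w*s^2)) :
    0 ≤ L*s^2*(2+s)*w' - c*(1+s+w'*s^2) := by
  have hKw : c*(1+s) ≤ (L*s^2*(2+s) - c*s^2)*w := by nlinarith
  have hK : 0 < L*s^2*(2+s) - c*s^2 := by nlinarith
  have := mul_le_mul_of_nonneg_left hww hK.le
  nlinarith

lemma core_shift' {c L s w w' : ℝ} (hc : 0 < c) (hs : 0 < s) (hw : 0 < w) (hww : w ≤ w')
    (h : 0 < L*s^2*(2+s)*w - c*(1+s+w*s^2)) :
    0 < L*s^2*(2+s)*w' - c*(1+s+w'*s^2) := by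
  have hKw : c*(1+s) < (L*s^2*(2+s) - c*s^2)*w := by nlinarith
  have hK : 0 < L*s^2*(2+s) - c*s^2 := by nlinarith
  have := mul_le_mul_of_nonneg_left hww hK.le
  nlinarith

lemma FDD_nonneg_iff {s : ℝ} (hs : 0 < s) {b : ℝ} (hb : 0 < b) (hb1 : b < 1) :
    0 ≤ FDD s b ↔
      0 ≤ Real.log 2 * s^2*(2+s)*(b*(1-b)) - psi s 2⁻¹ * (1+s+(b*(1-b))*s^2) := by
  rw [fdd_eq hs hb hb1]
  have hw : 0 < b*(1-b) := by nlinarith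
  have hD : 0 < (b*(1-b)) * (1+s+(b*(1-b))*s^2) := by
    have : (0:ℝ) < 1+s+(b*(1-b))*s^2 := by nlinarith
    positivity
  rw [le_div_iff₀ hD, zero_mul]

lemma FDD_pos_iff {s : ℝ} (hs : 0 < s) {b : ℝ} (hb : 0 < b) (hb1 : b < 1) :
    0 < FDD s b ↔
      0 < Real.log 2 * s^2*(2+s)*(b*(1-b)) - psi s 2⁻¹ * (1+s+(b*(1-b))*s^2) := by
  rw [fdd_eq hs hb hb1]
  have hw : 0 < b*(1-b) := by nlinarith
  have hD : 0 < (b*(1-b)) * (1+s+(b*(1-b))*s^2) := by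
    have : (0:ℝ) < 1+s+(b*(1-b))*s^2 := by nlinarith
    positivity
  rw [lt_div_iff₀ hD, zero_mul]

lemma FDD_mono {s : ℝ} (hs : 0 < s) {a a' : ℝ} (h0 : 0 < a) (haa : a ≤ a')
    (h2 : a' ≤ 1/2) (h : 0 ≤ FDD s a) : 0 ≤ FDD s a' := by
  have h0' : 0 < a' := lt_of_lt_of_le h0 haa
  have ha1 : a < 1 := by linarith
  have ha1' : a' < 1 := by linarith
  rw [FDD_nonneg_iff hs h0 ha1] at h
  rw [FDD_nonneg_iff hs h0' ha1']
  exact core_shift (psi_half_pos hs) hs (by nlinarith) (by nlinarith) h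

lemma FDD_mono' {s : ℝ} (hs : 0 < s) {a a' : ℝ} (h0 : 0 < a) (haa : a ≤ a')
    (h2 : a' ≤ 1/2) (h : 0 < FDD s a) : 0 < FDD s a' := by
  have h0' : 0 < a' := lt_of_lt_of_le h0 haa
  have ha1 : a < 1 := by linarith
  have ha1' : a' < 1 := by linarith
  rw [FDD_pos_iff hs h0 ha1] at h
  rw [FDD_pos_iff hs h0' ha1']
  exact core_shift' (psi_half_pos hs) hs (by nlinarith) (by nlinarith) h
lemma phi_zero : phi 0 = 0 := by simp [phi]

lemma FF_zero (s : ℝ) : FF s 0 = 0 := by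
  simp [FF, psi, Hb, phi]

lemma Hb_half : Hb 2⁻¹ = Real.log 2 := by
  have : (1:ℝ) - 2⁻¹ = 2⁻¹ := by norm_num
  rw [Hb, this, Real.negMulLog, Real.log_inv]
  ring

lemma FF_half (s : ℝ) : FF s 2⁻¹ = 0 := by
  rw [FF, Hb_half]; ring

lemma FD_half (s : ℝ) : FD s 2⁻¹ = 0 := by
  have : (1:ℝ) - 2⁻¹ = 2⁻¹ := by norm_num
  rw [FD, this]; ring

lemma Hb_symm (a : ℝ) : Hb (1-a) = Hb a := by
  have h1 : (1:ℝ) - (1-a) = a := by ring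
  rw [Hb, Hb, h1, add_comm]

lemma psi_symm (s a : ℝ) : psi s (1-a) = psi s a := by
  have h1 : (1:ℝ) - (1-a) = a := by ring
  rw [psi, psi, h1]
  ring

lemma FF_symm (s a : ℝ) : FF s (1-a) = FF s a := by
  rw [FF, FF, Hb_symm, psi_symm]

lemma continuous_FF (s : ℝ) : Continuous (FF s) := by
  have hphi : ∀ c : ℝ, Continuous (fun a : ℝ => phi (a*c)) := by
    intro c
    have : (fun a : ℝ => phi (a*c)) =
        (fun x : ℝ => x * Real.log x) ∘ (fun a : ℝ => 1 + a*c) := by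
      funext a; simp [phi, Function.comp]
    rw [this]
    exact Real.continuous_mul_log.comp (continuous_const.add (continuous_id.mul continuous_const))
  have hpsi : Continuous (fun a => psi s a) := by
    unfold psi
    apply Continuous.sub
    apply Continuous.sub continuous_const (hphi s)
    have : (fun a : ℝ => phi ((1-a)*s)) = (fun a : ℝ => phi (a*s)) ∘ (fun a : ℝ => 1-a) := rfl
    rw [this]
    exact (hphi s).comp (continuous_const.sub continuous_id)
  have hHb : Continuous Hb :=
    (Real.continuous_negMulLog).add
      ((Real.continuous_negMulLog).comp (continuous_const.sub continuous_id))
  exact (continuous_const.mul hHb).sub (continuous_const.mul hpsi)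

lemma domain_facts {s : ℝ} (hs : 0 < s) {a : ℝ} (h0 : 0 < a) (h1 : a < 1) :
    a ≠ 0 ∧ a ≠ 1 ∧ (0:ℝ) < 1 + a*s ∧ (0:ℝ) < 1 + (1-a)*s :=
  ⟨h0.ne', h1.ne, by nlinarith, by nlinarith⟩

lemma caseA {s : ℝ} (hs : 0 < s) {z : ℝ} (hz : 0 < z) (hz2 : z ≤ 1/2)
    (h : 0 ≤ FDD s z) : 0 ≤ FF s z := by
  have hhalf : ((2:ℝ)⁻¹) = 1/2 := by norm_num
  rcases eq_or_lt_of_le hz2 with heq | hlt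
  · rw [heq, ← hhalf, FF_half]
  have hint : interior (Set.Icc z (1/2)) = Set.Ioo z (1/2) := interior_Icc
  have hmem : ∀ a ∈ Set.Icc z (1/2), 0 < a ∧ a < 1 := by
    intro a ha; exact ⟨lt_of_lt_of_le hz ha.1, by nlinarith [ha.2]⟩
  have hFDmono : MonotoneOn (FD s) (Set.Icc z (1/2)) := by
    apply monotoneOn_of_hasDerivWithinAt_nonneg (convex_Icc _ _)
      (f' := FDD s)
    · intro a ha
      obtain ⟨h0, h1⟩ := hmem a ha
      obtain ⟨n0, n1, n2, n3⟩ := domain_facts hs h0 h1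
      exact (hasDerivAt_FD s a n0 n1 n2 n3).continuousAt.continuousWithinAt
    · intro a ha
      rw [hint] at ha
      obtain ⟨h0, h1⟩ := hmem a (Set.Ioo_subset_Icc_self ha)
      obtain ⟨n0, n1, n2, n3⟩ := domain_facts hs h0 h1
      exact (hasDerivAt_FD s a n0 n1 n2 n3).hasDerivWithinAt
    · intro a ha
      rw [hint] at ha
      exact FDD_mono hs hz ha.1.le ha.2.le h
  have h12 : (1:ℝ)/2 ∈ Set.Icc z (1/2) := ⟨hz2, le_refl _⟩
  have hFDle : ∀ a ∈ Set.Icc z (1/2), FD s a ≤ 0 := by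
    intro a ha
    have := hFDmono ha h12 ha.2
    rwa [← hhalf, FD_half] at this
  have hFFanti : AntitoneOn (FF s) (Set.Icc z (1/2)) := by
    apply antitoneOn_of_hasDerivWithinAt_nonpos (convex_Icc _ _) (f' := FD s)
    · exact (continuous_FF s).continuousOn
    · intro a ha
      rw [hint] at ha
      obtain ⟨h0, h1⟩ := hmem a (Set.Ioo_subset_Icc_self ha)
      obtain ⟨n0, n1, n2, n3⟩ := domain_facts hs h0 h1
      exact (hasDerivAt_FF s a n0 n1 n2 n3).hasDerivWithinAt
    · intro a ha
      rw [hint] at ha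
      exact hFDle a (Set.Ioo_subset_Icc_self ha)
  have := hFFanti (Set.mem_Icc.2 ⟨le_refl z, hz2⟩) h12 hz2
  rwa [← hhalf, FF_half] at this

lemma continuousOn_FDD {s : ℝ} (hs : 0 < s) {z : ℝ} (hz : 0 < z) :
    ContinuousOn (FDD s) (Set.Icc z (1/2)) := by
  intro b hb
  have h0 : 0 < b := lt_of_lt_of_le hz hb.1
  have h1 : b < 1 := by nlinarith [hb.2]
  obtain ⟨n0, n1, n2, n3⟩ := domain_facts hs h0 h1
  have n1' : (1:ℝ) - b ≠ 0 := sub_ne_zero.2 (Ne.symm n1)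
  apply ContinuousAt.continuousWithinAt
  apply ContinuousAt.add
  · exact continuousAt_const.mul
      (((((continuousAt_const.sub continuousAt_id).inv₀ n1')).neg).sub
        (continuousAt_id.inv₀ n0))
  · apply continuousAt_const.mul
    apply continuousAt_const.mul
    apply ContinuousAt.add
    · exact continuousAt_const.div
        (continuousAt_const.add ((continuousAt_const.sub continuousAt_id).mul
          continuousAt_const)) n3.ne'
    · exact continuousAt_const.div
        (continuousAt_const.add (continuousAt_id.mul continuousAt_const)) n2.ne'

lemma FF_nonneg_left {s : ℝ} (hs : 0 < s) {a : ℝ} (h0 : 0 < a) (h2 : a ≤ 1/2) :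
    0 ≤ FF s a := by
  have hhalf : ((2:ℝ)⁻¹) = 1/2 := by norm_num
  by_cases hA : 0 ≤ FDD s a
  · exact caseA hs h0 h2 hA
  push_neg at hA
  -- find a₁ with a ≤ a₁ ≤ 1/2, 0 ≤ FF s a₁, and FDD ≤ 0 on (0, a₁)
  obtain ⟨a₁, ha₁l, ha₁r, hFF1, hneg⟩ :
      ∃ a₁, a ≤ a₁ ∧ a₁ ≤ 1/2 ∧ 0 ≤ FF s a₁ ∧ ∀ x, 0 < x → x ≤ a₁ → FDD s x ≤ 0 := by
    by_cases hB : 0 ≤ FDD s (1/2)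
    · obtain ⟨a₁, hmem, hval⟩ := intermediate_value_Icc h2 (continuousOn_FDD hs h0)
        (Set.mem_Icc.2 ⟨hA.le, hB⟩)
      refine ⟨a₁, hmem.1, hmem.2, caseA hs (lt_of_lt_of_le h0 hmem.1) hmem.2 hval.ge, ?_⟩
      intro x hx hxle
      by_contra hpos
      push_neg at hpos
      have := FDD_mono' hs hx hxle hmem.2 hpos
      rw [hval] at this
      exact lt_irrefl 0 this
    · push_neg at hB
      refine ⟨1/2, h2, le_refl _, by rw [← hhalf, FF_half], ?_⟩
      intro x hx hxle
      by_contra hpos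
      push_neg at hpos
      exact absurd (FDD_mono' hs hx hxle (le_refl _) hpos) (not_lt.2 hB.le)
  have ha₁0 : 0 < a₁ := lt_of_lt_of_le h0 ha₁l
  -- concavity of FF on [0, a₁]
  have hconc : ConcaveOn ℝ (Set.Icc 0 a₁) (FF s) := by
    apply concaveOn_of_hasDerivWithinAt2_nonpos (convex_Icc _ _)
      (f' := FD s) (f'' := FDD s) ((continuous_FF s).continuousOn)
    · intro x hx
      rw [interior_Icc] at hx
      have hx1 : x < 1 := by nlinarith [hx.2, ha₁r]
      obtain ⟨n0, n1, n2, n3⟩ := domain_facts hs hx.1 hx1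
      exact (hasDerivAt_FF s x n0 n1 n2 n3).hasDerivWithinAt
    · intro x hx
      rw [interior_Icc] at hx
      have hx1 : x < 1 := by nlinarith [hx.2, ha₁r]
      obtain ⟨n0, n1, n2, n3⟩ := domain_facts hs hx.1 hx1
      exact (hasDerivAt_FD s x n0 n1 n2 n3).hasDerivWithinAt
    · intro x hx
      rw [interior_Icc] at hx
      exact hneg x hx.1 hx.2.le
  -- combination: a = (1 - a/a₁) • 0 + (a/a₁) • a₁
  have hw1 : (0:ℝ) ≤ 1 - a/a₁ := by
    rw [sub_nonneg, div_le_one ha₁0]; exact ha₁l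
  have hw2 : (0:ℝ) ≤ a/a₁ := by positivity
  have hcomb := hconc.2 (Set.mem_Icc.2 ⟨le_refl 0, ha₁0.le⟩)
    (Set.mem_Icc.2 ⟨ha₁0.le, le_refl _⟩) hw1 hw2 (by ring)
  have hpt : (1 - a/a₁) • (0:ℝ) + (a/a₁) • a₁ = a := by
    simp only [smul_eq_mul, mul_zero, zero_add]
    field_simp
  rw [hpt] at hcomb
  have hlb : 0 ≤ (1 - a/a₁) • FF s 0 + (a/a₁) • FF s a₁ := by
    rw [FF_zero]
    simp only [smul_eq_mul, mul_zero, zero_add]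
    exact mul_nonneg hw2 hFF1
  linarith [hcomb]

lemma FF_nonneg {s : ℝ} (hs : 0 < s) {a : ℝ} (h0 : 0 ≤ a) (h1 : a ≤ 1) :
    0 ≤ FF s a := by
  rcases eq_or_lt_of_le h0 with h | h
  · rw [← h, FF_zero]
  rcases le_or_gt a (1/2) with h2 | h2
  · exact FF_nonneg_left hs h h2
  · rcases eq_or_lt_of_le h1 with he | he
    · rw [he]
      have : FF s 1 = FF s 0 := by
        have := FF_symm s 0
        simpa using this
      rw [this, FF_zero]
    · have := FF_nonneg_left hs (a := 1-a) (by linarith) (by linarith)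
      rwa [FF_symm] at this



lemma youngC_pos {m : ℝ} (h0 : 0 < m) (h1 : m < 1) : 0 < youngC m := by
  apply div_pos (Real.rpow_pos_of_pos h0 _)
  apply Real.rpow_pos_of_pos
  rw [abs_pos]
  apply div_ne_zero h0.ne'
  intro h; linarith [sub_eq_zero.1 h]

lemma youngC_log {m : ℝ} (h0 : 0 < m) (h1 : m < 1) :
    Real.log (youngC m) = (1/m) * Real.log m
      - ((m-1)/m) * (Real.log m - Real.log (1-m)) := by
  have hm1 : m - 1 ≠ 0 := by intro h; linarith [sub_eq_zero.1 h]
  have habs : |m / (m-1)| = m / (1-m) := by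
    rw [abs_div, abs_of_pos h0, abs_of_neg (by linarith : m - 1 < 0)]
    rw [neg_sub]
  have hfrac : 0 < m / (1-m) := div_pos h0 (by linarith)
  have e0 : Real.log (youngC m) = Real.log (m ^ (1/m : ℝ)) - Real.log (|m/(m-1)| ^ ((m-1)/m : ℝ)) := by
    rw [youngC]
    exact Real.log_div (Real.rpow_pos_of_pos h0 _).ne' (by
      rw [habs]; exact (Real.rpow_pos_of_pos hfrac _).ne')
  have e1 : Real.log (m ^ (1/m : ℝ)) = (1/m) * Real.log m := Real.log_rpow h0 _
  have e2 : Real.log (|m/(m-1)| ^ ((m-1)/m : ℝ)) = ((m-1)/m) * (Real.log m - Real.log (1-m)) := by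
    rw [habs, Real.log_rpow hfrac, Real.log_div h0.ne' (by linarith : (1:ℝ) - m ≠ 0)]
  rw [e0, e1, e2]

lemma Aconst_pos {p q r : ℝ} (hp : p ∈ Set.Ioo (0:ℝ) 1) (hq : q ∈ Set.Ioo (0:ℝ) 1)
    (hr : r ∈ Set.Ioo (0:ℝ) 1) : 0 < Aconst p q r := by
  apply div_pos
  apply mul_pos
  apply div_pos (mul_pos (youngC_pos hp.1 hp.2) (youngC_pos hq.1 hq.2)) (youngC_pos hr.1 hr.2)
  · exact Real.rpow_pos_of_pos hr.1 _
  · exact mul_pos (Real.rpow_pos_of_pos hp.1 _) (Real.rpow_pos_of_pos hq.1 _)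

lemma Aconst_log {p q r : ℝ} (hp : p ∈ Set.Ioo (0:ℝ) 1) (hq : q ∈ Set.Ioo (0:ℝ) 1)
    (hr : r ∈ Set.Ioo (0:ℝ) 1) :
    Real.log (Aconst p q r) = Real.log (youngC p) + Real.log (youngC q)
      - Real.log (youngC r) + (2/r) * Real.log r
      - (2/p) * Real.log p - (2/q) * Real.log q := by
  have h1 := youngC_pos hp.1 hp.2
  have h2 := youngC_pos hq.1 hq.2
  have h3 := youngC_pos hr.1 hr.2
  have hpr : (0:ℝ) < p ^ (2/p : ℝ) := Real.rpow_pos_of_pos hp.1 _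
  have hqr : (0:ℝ) < q ^ (2/q : ℝ) := Real.rpow_pos_of_pos hq.1 _
  have hrr : (0:ℝ) < r ^ (2/r : ℝ) := Real.rpow_pos_of_pos hr.1 _
  rw [Aconst, Real.log_div (by positivity) (by positivity),
    Real.log_mul (by positivity) hrr.ne',
    Real.log_div (mul_pos h1 h2).ne' h3.ne',
    Real.log_mul h1.ne' h2.ne',
    Real.log_mul (Real.rpow_pos_of_pos hp.1 _).ne' (Real.rpow_pos_of_pos hq.1 _).ne',
    Real.log_rpow hr.1, Real.log_rpow hp.1, Real.log_rpow hq.1]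
  ring

lemma k_pos {s : ℝ} (hs : 0 < s) : 0 < s * Real.log 2 - psi s 2⁻¹ := by
  set g : ℝ → ℝ := fun t => t*Real.log 2 + (2+t)*Real.log (1+t/2) - (1+t)*Real.log (1+t)
    with hg
  have mono : StrictMonoOn g (Set.Ici 0) := by
    apply strictMonoOn_of_hasDerivWithinAt_pos (convex_Ici 0)
      (f' := fun t => Real.log 2 + Real.log (1+t/2) - Real.log (1+t))
    · apply ContinuousOn.sub
      apply ContinuousOn.add
      · exact (continuousOn_id.mul continuousOn_const)
      · apply ContinuousOn.mul (continuousOn_const.add continuousOn_id)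
        apply ContinuousOn.log
        · exact continuousOn_const.add (continuousOn_id.div_const 2)
        · intro t ht
          have : (0:ℝ) ≤ t := ht
          positivity
      · apply ContinuousOn.mul (continuousOn_const.add continuousOn_id)
        apply ContinuousOn.log
        · exact continuousOn_const.add continuousOn_id
        · intro t ht
          have : (0:ℝ) ≤ t := ht
          positivity
    · intro t ht
      rw [interior_Ici] at ht
      have ht0 : (0:ℝ) < t := ht
      have d2 : (0:ℝ) < 1 + t/2 := by linarith
      have d3 : (0:ℝ) < 1 + t := by linarith
      have h1 : HasDerivAt (fun t : ℝ => t * Real.log 2) (Real.log 2) t := by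
        simpa using (hasDerivAt_id t).mul_const (Real.log 2)
      have h2 : HasDerivAt (fun t : ℝ => (2+t) * Real.log (1+t/2))
          (Real.log (1+t/2) + (2+t) * ((1+t/2)⁻¹ * (1/2))) t := by
        have i1 : HasDerivAt (fun t : ℝ => 2+t) 1 t := by
          simpa using (hasDerivAt_id t).const_add 2
        have i2 : HasDerivAt (fun t : ℝ => Real.log (1+t/2)) ((1+t/2)⁻¹ * (1/2)) t := by
          have inner : HasDerivAt (fun t : ℝ => 1+t/2) (1/2) t := by
            simpa using ((hasDerivAt_id t).div_const 2).const_add 1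
          have := (Real.hasDerivAt_log d2.ne').comp t inner
          simpa [Function.comp_def] using this
        have := i1.mul i2
        refine this.congr_deriv ?_
        ring
      have h3 : HasDerivAt (fun t : ℝ => (1+t) * Real.log (1+t))
          (Real.log (1+t) + 1) t := by
        have inner : HasDerivAt (fun t : ℝ => 1+t) 1 t := by
          simpa using (hasDerivAt_id t).const_add 1
        have outer : HasDerivAt (fun x : ℝ => x * Real.log x) (Real.log (1+t) + 1) (1+t) :=
          Real.hasDerivAt_mul_log d3.ne'
        have := outer.comp t inner
        simpa [Function.comp_def] using this
      have := (h1.add h2).sub h3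
      refine HasDerivAt.hasDerivWithinAt (this.congr_deriv ?_)
      have e : (2+t) * ((1+t/2)⁻¹ * (1/2)) = 1 := by
        rw [mul_comm]
        field_simp
      rw [e]; ring
    · intro t ht
      rw [interior_Ici] at ht
      have ht0 : (0:ℝ) < t := ht
      have d3 : (0:ℝ) < 1 + t := by linarith
      have e : Real.log 2 + Real.log (1+t/2) = Real.log (2+t) := by
        rw [← Real.log_mul (by norm_num) (by positivity)]
        norm_num; ring_nf
      rw [e]
      have := Real.log_lt_log d3 (by linarith : (1:ℝ)+t < 2+t)
      linarith
  have h0 : g 0 = 0 := by simp [hg]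
  have hgs := mono (Set.mem_Ici.2 (le_refl 0)) (Set.mem_Ici.2 hs.le) hs
  rw [h0] at hgs
  have : s * Real.log 2 - psi s 2⁻¹ = g s := by
    rw [psi_half, phi, phi, hg]
    ring
  rw [this]; exact hgs
lemma mem_Ioo_inv {u : ℝ} (hu : 1 < 1 + u) : (1+u)⁻¹ ∈ Set.Ioo (0:ℝ) 1 :=
  ⟨inv_pos.2 (by linarith), inv_lt_one_of_one_lt₀ hu⟩

lemma logA {s a : ℝ} (hs : 0 < s) (ha : 0 < a) (ha1 : a < 1) :
    Real.log (Aconst (1+a*s)⁻¹ (1+(1-a)*s)⁻¹ (1+s)⁻¹) = s * Hb a - psi s a := by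
  have hb0 : 0 < 1-a := by linarith
  have d1 : (0:ℝ) < 1+a*s := by nlinarith
  have d2 : (0:ℝ) < 1+(1-a)*s := by nlinarith
  have d3 : (0:ℝ) < 1+s := by linarith
  have hp := mem_Ioo_inv (by nlinarith : (1:ℝ) < 1+a*s)
  have hq := mem_Ioo_inv (by nlinarith : (1:ℝ) < 1+(1-a)*s)
  have hr := mem_Ioo_inv (by nlinarith : (1:ℝ) < 1+s)
  rw [Aconst_log hp hq hr, youngC_log hp.1 hp.2, youngC_log hq.1 hq.2, youngC_log hr.1 hr.2]
  -- coefficient simplifications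
  have c1 : (1:ℝ)/(1+a*s)⁻¹ = 1+a*s := by field_simp
  have c2 : (1:ℝ)/(1+(1-a)*s)⁻¹ = 1+(1-a)*s := by field_simp
  have c3 : (1:ℝ)/(1+s)⁻¹ = 1+s := by field_simp
  have c4 : ((1+a*s)⁻¹-1)/(1+a*s)⁻¹ = -(a*s) := by field_simp; ring
  have c5 : ((1+(1-a)*s)⁻¹-1)/(1+(1-a)*s)⁻¹ = -((1-a)*s) := by field_simp; ring
  have c6 : ((1+s)⁻¹-1)/(1+s)⁻¹ = -s := by field_simp; ring
  have c7 : (2:ℝ)/(1+a*s)⁻¹ = 2*(1+a*s) := by field_simp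
  have c8 : (2:ℝ)/(1+(1-a)*s)⁻¹ = 2*(1+(1-a)*s) := by field_simp
  have c9 : (2:ℝ)/(1+s)⁻¹ = 2*(1+s) := by field_simp
  -- log simplifications
  have l1 : Real.log ((1+a*s)⁻¹) = -Real.log (1+a*s) := Real.log_inv _
  have l2 : Real.log ((1+(1-a)*s)⁻¹) = -Real.log (1+(1-a)*s) := Real.log_inv _
  have l3 : Real.log ((1+s)⁻¹) = -Real.log (1+s) := Real.log_inv _
  have m1 : (1:ℝ) - (1+a*s)⁻¹ = a*s/(1+a*s) := by field_simp; ring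
  have m2 : (1:ℝ) - (1+(1-a)*s)⁻¹ = (1-a)*s/(1+(1-a)*s) := by field_simp; ring
  have m3 : (1:ℝ) - (1+s)⁻¹ = s/(1+s) := by field_simp; ring
  have l4 : Real.log ((1:ℝ) - (1+a*s)⁻¹) = Real.log a + Real.log s - Real.log (1+a*s) := by
    rw [m1, Real.log_div (by positivity) d1.ne', Real.log_mul ha.ne' hs.ne']
  have l5 : Real.log ((1:ℝ) - (1+(1-a)*s)⁻¹)
      = Real.log (1-a) + Real.log s - Real.log (1+(1-a)*s) := by
    rw [m2, Real.log_div (by positivity) d2.ne', Real.log_mul hb0.ne' hs.ne']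
  have l6 : Real.log ((1:ℝ) - (1+s)⁻¹) = Real.log s - Real.log (1+s) := by
    rw [m3, Real.log_div hs.ne' d3.ne']
  rw [c1, c2, c3, c4, c5, c6, c7, c8, c9, l1, l2, l3, l4, l5, l6]
  rw [Hb, psi, phi, phi, phi, Real.negMulLog, Real.negMulLog]
  ring

lemma denom_eq {r : ℝ} (hr0 : 0 < r) (hr1 : r < 1) :
    (1 + r) * Real.log (1 + r) + r * Real.log (1 / (4 * r))
      = r * (((1-r)/r) * Real.log 2 - psi ((1-r)/r) 2⁻¹) := by
  set s := (1-r)/r with hsdef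
  have hr0' : r ≠ 0 := hr0.ne'
  have h1r : (0:ℝ) < 1 + r := by linarith
  have l3 : Real.log (1+s) = -Real.log r := by
    have e : 1 + s = r⁻¹ := by rw [hsdef]; field_simp; ring
    rw [e, Real.log_inv]
  have l2 : Real.log (1+s/2) = Real.log (1+r) - Real.log 2 - Real.log r := by
    have e : 1 + s/2 = (1+r)/(2*r) := by rw [hsdef]; field_simp; ring
    rw [e, Real.log_div h1r.ne' (by positivity), Real.log_mul (by norm_num) hr0']
    ring
  have l4 : Real.log (1/(4*r)) = -(2*Real.log 2 + Real.log r) := by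
    rw [one_div, Real.log_inv, Real.log_mul (by norm_num) hr0']
    have e : (4:ℝ) = 2*2 := by norm_num
    rw [e, Real.log_mul (by norm_num) (by norm_num)]
    ring
  rw [psi_half, phi, phi, l2, l3, l4, hsdef]
  field_simp
  ring

end EpiAux

open EpiAux in
theorem algebraic_epi_lemma (r : ℝ) (hr : r ∈ Set.Ioo (0 : ℝ) 1)
    (α : ℝ)
    (hα : α = (1 - r) * Real.log 2 /
      ((1 + r) * Real.log (1 + r) + r * Real.log (1 / (4 * r)))) :
    ∀ x y : ℝ, 0 < x → 0 < y →
      ∃ p q : ℝ, p ∈ Set.Ioo (0 : ℝ) 1 ∧ q ∈ Set.Ioo (0 : ℝ) 1 ∧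
        (p - 1) / p + (q - 1) / q = (r - 1) / r ∧
        Aconst p q r ^ (α * (r / (1 - r))) *
          x ^ (((1 - p) / p) * (r / (1 - r))) *
          y ^ (((1 - q) / q) * (r / (1 - r))) ≥ x + y := by
  obtain ⟨hr0, hr1⟩ := hr
  intro x y hx hy
  set s := (1-r)/r with hsdef
  have hs : 0 < s := div_pos (by linarith) hr0
  have hrs : r = (1+s)⁻¹ := by rw [hsdef]; field_simp; ring
  have hxy : 0 < x+y := by linarith
  set a := x/(x+y) with hadef
  have ha : 0 < a := div_pos hx hxy
  have ha1 : a < 1 := (div_lt_one hxy).2 (by linarith)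
  have hb0 : 0 < 1-a := by linarith
  clear_value s a
  have d1 : (0:ℝ) < 1+a*s := by nlinarith
  have d2 : (0:ℝ) < 1+(1-a)*s := by nlinarith
  have d3 : (0:ℝ) < 1+s := by linarith
  have hp := mem_Ioo_inv (by nlinarith : (1:ℝ) < 1+a*s)
  have hq := mem_Ioo_inv (by nlinarith : (1:ℝ) < 1+(1-a)*s)
  refine ⟨(1+a*s)⁻¹, (1+(1-a)*s)⁻¹, hp, hq, ?_, ?_⟩
  · have e1 : ((1+a*s)⁻¹ - 1)/(1+a*s)⁻¹ = -(a*s) := by field_simp; ring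
    have e2 : ((1+(1-a)*s)⁻¹ - 1)/(1+(1-a)*s)⁻¹ = -((1-a)*s) := by field_simp; ring
    have e3 : (r-1)/r = -s := by rw [hsdef]; field_simp; ring
    rw [e1, e2, e3]; ring
  · have hs1 : r/(1-r) = s⁻¹ := by rw [hsdef]; field_simp
    have x1 : ((1 - (1+a*s)⁻¹)/(1+a*s)⁻¹) * (r/(1-r)) = a := by
      have e : (1 - (1+a*s)⁻¹)/(1+a*s)⁻¹ = a*s := by field_simp; ring
      rw [e, hs1]
      field_simp
    have x2 : ((1 - (1+(1-a)*s)⁻¹)/(1+(1-a)*s)⁻¹) * (r/(1-r)) = 1-a := by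
      have e : (1 - (1+(1-a)*s)⁻¹)/(1+(1-a)*s)⁻¹ = (1-a)*s := by field_simp; ring
      rw [e, hs1]
      field_simp
    rw [x1, x2]
    have hA : 0 < Aconst (1+a*s)⁻¹ (1+(1-a)*s)⁻¹ r :=
      Aconst_pos hp hq ⟨hr0, hr1⟩
    have hlogA : Real.log (Aconst (1+a*s)⁻¹ (1+(1-a)*s)⁻¹ r) = s * Hb a - psi s a := by
      rw [hrs]
      exact logA hs ha ha1
    rw [ge_iff_le, Real.rpow_def_of_pos hA, Real.rpow_def_of_pos hx,
      Real.rpow_def_of_pos hy, ← Real.exp_add, ← Real.exp_add,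
      ← Real.exp_log hxy, Real.exp_le_exp]
    have hxa : Real.log x = Real.log a + Real.log (x+y) := by
      have e : Real.log a = Real.log x - Real.log (x+y) := by
        rw [hadef, Real.log_div hx.ne' hxy.ne']
      linarith
    have hyb : Real.log y = Real.log (1-a) + Real.log (x+y) := by
      have e1 : (1:ℝ) - a = y/(x+y) := by rw [hadef]; field_simp; ring
      have e : Real.log (1-a) = Real.log y - Real.log (x+y) := by
        rw [e1, Real.log_div hy.ne' hxy.ne']
      linarith
    have key : 0 ≤ psi s 2⁻¹ * Hb a - Real.log 2 * psi s a := FF_nonneg hs ha.le ha1.le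
    have kpos : 0 < s * Real.log 2 - psi s 2⁻¹ := k_pos hs
    have hβ : α * (r/(1-r)) * (s * Real.log 2 - psi s 2⁻¹) = Real.log 2 := by
      have hD := denom_eq hr0 hr1
      rw [← hsdef] at hD
      have hrs2 : r*s = 1-r := by rw [hsdef]; field_simp
      rw [hα, hD, hs1, ← hrs2]
      have hKne : s * Real.log 2 - psi s 2⁻¹ ≠ 0 := kpos.ne'
      have hKne' : s * Real.log 2 - psi s (1/2) ≠ 0 := by
        rw [show ((1:ℝ)/2) = 2⁻¹ by norm_num]
        exact hKne
      field_simp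
    have hfin : Hb a ≤ (s * Hb a - psi s a) * (α * (r/(1-r))) := by
      have h2 : (s * Hb a - psi s a) * (α * (r/(1-r))) * (s * Real.log 2 - psi s 2⁻¹)
          = (s * Hb a - psi s a) * Real.log 2 := by
        rw [mul_assoc, hβ]
      have h3 : Hb a * (s * Real.log 2 - psi s 2⁻¹)
          ≤ (s * Hb a - psi s a) * Real.log 2 := by nlinarith [key]
      rw [← h2] at h3
      exact le_of_mul_le_mul_right h3 kpos
    have hHb : Hb a = -(a*Real.log a) - (1-a)*Real.log (1-a) := by
      rw [Hb, Real.negMulLog, Real.negMulLog]; ring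
    rw [hlogA, hxa, hyb]
    have expand : (Real.log a + Real.log (x+y))*a + (Real.log (1-a)+Real.log (x+y))*(1-a)
        = a*Real.log a + (1-a)*Real.log (1-a) + Real.log (x+y) := by ring
    linarith [hfin, expand, hHb]
end

section
/- For all x, y > 0, one has (x+y)^{x+y} · (x+1)^{x+1} · (y+1)^{y+1} > x^x · y^y · (x+y+1)^{x+y+1}. Equivalently, the quantity A(p,q,r) expressed in the variables x = (1−p)/p, y = (1−q)/q (with r = 1/(x+y+1)) is strictly greater than 1. -/
open Real

noncomputable def uFun : ℝ → ℝ := fun t => t * log t - (t + 1) * log (t + 1)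

lemma uFun_hasDeriv {t : ℝ} (ht : 0 < t) :
    HasDerivAt uFun (log t - log (t + 1)) t := by
  have h1 : HasDerivAt (fun t : ℝ => t * log t) (log t + 1) t :=
    Real.hasDerivAt_mul_log ht.ne'
  have h2 : HasDerivAt (fun t : ℝ => (t + 1) * log (t + 1)) (log (t + 1) + 1) t := by
    have := (Real.hasDerivAt_mul_log (x := t + 1) (by linarith)).comp t
      ((hasDerivAt_id t).add_const 1)
    simpa [Function.comp_def] using this
  have := h1.sub h2
  exact this.congr_deriv (by ring)

lemma uFun_strictConvexOn : StrictConvexOn ℝ (Set.Ici 0) uFun := by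
  apply StrictMonoOn.strictConvexOn_of_deriv (convex_Ici 0)
  · exact (Real.continuous_mul_log.sub
      (Real.continuous_mul_log.comp (continuous_id.add continuous_const))).continuousOn
  · rw [interior_Ici]
    intro a ha b hb hab
    simp only [Set.mem_Ioi] at ha hb
    rw [(uFun_hasDeriv ha).deriv, (uFun_hasDeriv hb).deriv]
    have h : log (a * (b + 1)) < log (b * (a + 1)) := by
      apply Real.log_lt_log (by positivity)
      nlinarith
    rw [Real.log_mul ha.ne' (by linarith), Real.log_mul hb.ne' (by linarith)] at h
    linarith

lemma key_log (x y : ℝ) (hx : 0 < x) (hy : 0 < y) :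
    uFun x + uFun y < uFun (x + y) := by
  have hs : 0 < x + y := by linarith
  have h0 : uFun 0 = 0 := by simp [uFun]
  have hxy : (0:ℝ) ≠ x + y := hs.ne
  have c1 := uFun_strictConvexOn.2 (Set.self_mem_Ici) (Set.mem_Ici.2 hs.le) hxy
    (show (0:ℝ) < y / (x + y) by positivity) (show (0:ℝ) < x / (x + y) by positivity)
    (by field_simp; ring)
  have c2 := uFun_strictConvexOn.2 (Set.self_mem_Ici) (Set.mem_Ici.2 hs.le) hxy
    (show (0:ℝ) < x / (x + y) by positivity) (show (0:ℝ) < y / (x + y) by positivity)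
    (by field_simp)
  have e1 : (y / (x + y)) • (0:ℝ) + (x / (x + y)) • (x + y) = x := by
    simp only [smul_eq_mul]
    field_simp
    ring
  have e2 : (x / (x + y)) • (0:ℝ) + (y / (x + y)) • (x + y) = y := by
    simp only [smul_eq_mul]
    field_simp
    ring
  rw [e1, h0] at c1
  rw [e2, h0] at c2
  simp only [smul_eq_mul, mul_zero, zero_add] at c1 c2
  have hone : x / (x + y) + y / (x + y) = 1 := by field_simp
  calc uFun x + uFun y < x / (x + y) * uFun (x + y) + y / (x + y) * uFun (x + y) := by
        linarith
    _ = (x / (x + y) + y / (x + y)) * uFun (x + y) := by ring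
    _ = uFun (x + y) := by rw [hone, one_mul]

lemma key_ineq (x y : ℝ) (hx : 0 < x) (hy : 0 < y) :
    x ^ x * y ^ y * (x + y + 1) ^ (x + y + 1) <
    (x + y) ^ (x + y) * (x + 1) ^ (x + 1) * (y + 1) ^ (y + 1) := by
  have h := key_log x y hx hy
  have hs : 0 < x + y := by linarith
  rw [Real.rpow_def_of_pos hx, Real.rpow_def_of_pos hy,
    Real.rpow_def_of_pos (by linarith : (0:ℝ) < x + y + 1),
    Real.rpow_def_of_pos hs, Real.rpow_def_of_pos (by linarith : (0:ℝ) < x + 1),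
    Real.rpow_def_of_pos (by linarith : (0:ℝ) < y + 1),
    ← Real.exp_add, ← Real.exp_add, ← Real.exp_add, ← Real.exp_add]
  apply Real.exp_lt_exp.2
  simp only [uFun] at h
  have hx1 : x + 1 + 1 - 1 = x + 1 := by ring
  nlinarith [h]


lemma youngC_val (a : ℝ) (ha : 0 < a) :
    youngC (1 / (a + 1)) = 1 / ((a + 1) ^ (a + 1) * a ^ a) := by
  have ha1 : (0:ℝ) < a + 1 := by linarith
  have e1 : (1:ℝ) / (1 / (a + 1)) = a + 1 := by field_simp
  have e2 : (1 / (a + 1) - 1) / (1 / (a + 1)) = -a := by field_simp; ring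
  have e3 : (1 / (a + 1)) / (1 / (a + 1) - 1) = -(a⁻¹) := by
    rw [div_sub' ha1.ne']
    ring_nf
    field_simp
  rw [youngC, e1, e2, e3, abs_neg, abs_of_pos (by positivity)]
  rw [Real.inv_rpow ha.le, Real.rpow_neg ha.le, inv_inv]
  rw [one_div (a+1), Real.inv_rpow ha1.le]
  rw [div_eq_mul_inv, one_div, mul_inv]

lemma rp2 (a : ℝ) (ha : 0 < a) :
    (1 / (a + 1)) ^ (2 / (1 / (a + 1))) = 1 / ((a + 1) ^ (a + 1)) ^ 2 := by
  have ha1 : (0:ℝ) < a + 1 := by linarith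
  have e : 2 / (1 / (a + 1)) = (a + 1) * 2 := by field_simp
  rw [e, Real.rpow_mul (by positivity), Real.rpow_two,
    one_div (a+1), Real.inv_rpow ha1.le, one_div]
  rw [← inv_pow]

lemma Aconst_val (x y : ℝ) (hx : 0 < x) (hy : 0 < y) :
    Aconst (1 / (x + 1)) (1 / (y + 1)) (1 / (x + y + 1)) =
      ((x + y) ^ (x + y) * (x + 1) ^ (x + 1) * (y + 1) ^ (y + 1)) /
        (x ^ x * y ^ y * (x + y + 1) ^ (x + y + 1)) := by
  have hs : 0 < x + y := by linarith
  have h1 := youngC_val x hx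
  have h2 := youngC_val y hy
  have h3 : youngC (1 / (x + y + 1)) = 1 / ((x + y + 1) ^ (x + y + 1) * (x + y) ^ (x + y)) := by
    have := youngC_val (x + y) hs
    rw [show x + y + 1 = (x + y) + 1 by ring] at *
    exact this
  have h4 : (1 / (x + y + 1) : ℝ) ^ (2 / (1 / (x + y + 1))) =
      1 / ((x + y + 1) ^ (x + y + 1)) ^ 2 := by
    have := rp2 (x + y) hs
    rw [show x + y + 1 = (x + y) + 1 by ring] at *
    exact this
  rw [Aconst, h1, h2, h3, h4, rp2 x hx, rp2 y hy]
  have p1 : (0:ℝ) < (x + 1) ^ (x + 1) := by positivity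
  have p2 : (0:ℝ) < (y + 1) ^ (y + 1) := by positivity
  have p3 : (0:ℝ) < (x + y + 1) ^ (x + y + 1) := by positivity
  have p4 : (0:ℝ) < x ^ x := by positivity
  have p5 : (0:ℝ) < y ^ y := by positivity
  have p6 : (0:ℝ) < (x + y) ^ (x + y) := by positivity
  field_simp

theorem A_gt_one (x y : ℝ) (hx : 0 < x) (hy : 0 < y) :
    (x + y) ^ (x + y) * (x + 1) ^ (x + 1) * (y + 1) ^ (y + 1) >
      x ^ x * y ^ y * (x + y + 1) ^ (x + y + 1) ∧
    Aconst (1 / (x + 1)) (1 / (y + 1)) (1 / (x + y + 1)) > 1 := by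
  have h := key_ineq x y hx hy
  refine ⟨h, ?_⟩
  rw [Aconst_val x y hx hy]
  rw [gt_iff_lt, lt_div_iff₀ (by positivity), one_mul]
  exact h
end
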